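/- arXiv:2504.19904 — 3 statements merged into one kernel-verified Lean document; each statement's English description precedes it below -/
import Mathlib

section
/- Let ν ∈ (0,1), λ₁ > 0, c > 0, and set τ = (λ₁ ν^ν (1−ν)^{1−ν})^{1/(1−ν)}. Then for every s > 0, the infimum over θ ∈ (0,∞) of θ^{1−1/ν}·c^{1/ν}·s + τ·θ equals λ₁·c·s^ν, and this infimum is attained at some θ* > 0. -/
private lemma eq_of_log_eq {a b : ℝ} (ha : 0 < a) (hb : 0 < b)
    (h : Real.log a = Real.log b) : a = b := by
  rw [← Real.exp_log ha, ← Real.exp_log hb, h]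

/-- Scalar variational identity underlying the group bridge reformulation:
for `ν ∈ (0,1)`, `λ₁ > 0`, `c > 0`, `τ = (λ₁ ν^ν (1-ν)^(1-ν))^(1/(1-ν))` and any `s > 0`,
the infimum over `θ ∈ (0,∞)` of `θ^(1-1/ν) c^(1/ν) s + τ θ` equals `λ₁ c s^ν` and is attained. -/
theorem group_bridge_scalar_identity
    (ν lam₁ c τ s : ℝ)
    (hν : ν ∈ Set.Ioo (0 : ℝ) 1) (hlam₁ : 0 < lam₁) (hc : 0 < c)
    (hτ : τ = (lam₁ * ν ^ ν * (1 - ν) ^ (1 - ν)) ^ ((1 : ℝ) / (1 - ν)))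
    (hs : 0 < s) :
    IsLeast ((fun θ : ℝ => θ ^ (1 - 1 / ν) * c ^ ((1 : ℝ) / ν) * s + τ * θ) '' Set.Ioi 0)
      (lam₁ * c * s ^ ν) := by
  obtain ⟨hν0, hν1⟩ := hν
  have h1ν : (0:ℝ) < 1 - ν := by linarith
  have hKpos : 0 < lam₁ * ν ^ ν * (1 - ν) ^ (1 - ν) := by positivity
  have hτpos : 0 < τ := by rw [hτ]; positivity
  have hlogτ : Real.log τ =
      (1 / (1 - ν)) * (Real.log lam₁ + ν * Real.log ν + (1 - ν) * Real.log (1 - ν)) := by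
    rw [hτ, Real.log_rpow hKpos, Real.log_mul (by positivity) (by positivity),
      Real.log_mul (by positivity) (by positivity),
      Real.log_rpow hν0, Real.log_rpow h1ν]
  constructor
  · -- attained at θ⋆ = (1-ν) lam₁ c s^ν / τ
    refine ⟨(1 - ν) * lam₁ * c * s ^ ν / τ, Set.mem_Ioi.mpr (by positivity), ?_⟩
    have hθpos : 0 < (1 - ν) * lam₁ * c * s ^ ν / τ := by positivity
    have hA : ((1 - ν) * lam₁ * c * s ^ ν / τ) ^ (1 - 1/ν) * c ^ ((1:ℝ)/ν) * s
        = ν * (lam₁ * c * s ^ ν) := by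
      refine eq_of_log_eq (by positivity) (by positivity) ?_
      simp (disch := positivity) only [Real.log_mul, Real.log_div, Real.log_rpow]
      rw [hlogτ]
      field_simp
      ring
    have hB : τ * ((1 - ν) * lam₁ * c * s ^ ν / τ) = (1 - ν) * (lam₁ * c * s ^ ν) := by
      field_simp
    simp only []
    rw [hA, hB]
    ring
  · -- lower bound
    rintro x ⟨θ, hθ, rfl⟩
    have hθ0 : (0:ℝ) < θ := hθ
    have hApos : 0 < θ ^ (1 - 1/ν) * c ^ ((1:ℝ)/ν) * s := by positivity
    have key : (θ ^ (1 - 1/ν) * c ^ ((1:ℝ)/ν) * s / ν) ^ ν * (τ * θ / (1 - ν)) ^ (1 - ν)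
        = lam₁ * c * s ^ ν := by
      refine eq_of_log_eq (by positivity) (by positivity) ?_
      simp (disch := positivity) only [Real.log_mul, Real.log_div, Real.log_rpow]
      rw [hlogτ]
      field_simp
      ring
    have amgm := Real.geom_mean_le_arith_mean2_weighted hν0.le h1ν.le
      (le_of_lt (show (0:ℝ) < θ ^ (1 - 1/ν) * c ^ ((1:ℝ)/ν) * s / ν by positivity))
      (le_of_lt (show (0:ℝ) < τ * θ / (1 - ν) by positivity)) (by ring)
    rw [key] at amgm
    calc lam₁ * c * s ^ ν
        ≤ ν * (θ ^ (1 - 1/ν) * c ^ ((1:ℝ)/ν) * s / ν) + (1 - ν) * (τ * θ / (1 - ν)) := amgm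
      _ = θ ^ (1 - 1/ν) * c ^ ((1:ℝ)/ν) * s + τ * θ := by field_simp
end

section
/- Let Ψ be a real N×K matrix, R a symmetric positive semidefinite K×K real matrix, λ₂ ≥ 0, and suppose the smallest eigenvalue ρ_min of M = ΨᵀΨ + λ₂R is strictly positive. Let γ* ∈ ℝ^K, let ε : Ω → ℝ^N be a random vector on a probability space with independent coordinates, each square-integrable with mean zero and variance σ² < ∞, and define the random ridge estimator b = M⁻¹Ψᵀ(Ψγ* + ε). Then E‖b − γ*‖₂² ≤ 2 ρ_min^{−2} ( λ₂² ‖Rγ*‖₂² + σ² ‖Ψ‖_F² ). -/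
open Matrix MeasureTheory ProbabilityTheory

lemma quad_lower {K : ℕ} {M : Matrix (Fin K) (Fin K) ℝ} (hM : M.IsHermitian)
    {ρ : ℝ} (hρ : ∀ k, ρ ≤ hM.eigenvalues k) (v : Fin K → ℝ) :
    ρ * (v ⬝ᵥ v) ≤ v ⬝ᵥ M.mulVec v := by
  set U : Matrix (Fin K) (Fin K) ℝ := (hM.eigenvectorUnitary : Matrix (Fin K) (Fin K) ℝ) with hUdef
  have hsU : star U = Uᵀ := by
    rw [Matrix.star_eq_conjTranspose, Matrix.conjTranspose_eq_transpose_of_trivial]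
  have hU : U * Uᵀ = 1 := by
    rw [← hsU]; exact (Matrix.mem_unitaryGroup_iff).mp hM.eigenvectorUnitary.2
  set w : Fin K → ℝ := Uᵀ.mulVec v with hw
  have hvv : v ⬝ᵥ v = w ⬝ᵥ w := by
    rw [hw, Matrix.dotProduct_mulVec, Matrix.vecMul_transpose, Matrix.mulVec_mulVec,
      hU, Matrix.one_mulVec]
  have hquad : v ⬝ᵥ M.mulVec v = ∑ k, hM.eigenvalues k * (w k)^2 := by
    conv_lhs => rw [hM.spectral_theorem, Unitary.conjStarAlgAut_apply]
    rw [hsU, ← Matrix.mulVec_mulVec, ← Matrix.mulVec_mulVec, Matrix.dotProduct_mulVec,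
      ← Matrix.mulVec_transpose]
    rw [show (Matrix.diagonal (RCLike.ofReal ∘ hM.eigenvalues) : Matrix (Fin K) (Fin K) ℝ) *ᵥ w
        = fun k => hM.eigenvalues k * w k by
      ext k; simp [Matrix.mulVec_diagonal]]
    simp only [dotProduct, ← hw]
    refine Finset.sum_congr rfl fun k _ => by ring
  rw [hquad, hvv]
  simp only [dotProduct, Finset.mul_sum]
  apply Finset.sum_le_sum
  intro k _
  nlinarith [sq_nonneg (w k), hρ k]

lemma dp_self_nonneg {n : Type*} [Fintype n] (v : n → ℝ) : 0 ≤ v ⬝ᵥ v :=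
  Finset.sum_nonneg fun i _ => mul_self_nonneg (v i)

lemma posdef_of_eigen {K : ℕ} {M : Matrix (Fin K) (Fin K) ℝ} (hM : M.IsHermitian)
    {ρ : ℝ} (hρpos : 0 < ρ) (hρ : ∀ k, ρ ≤ hM.eigenvalues k) : M.PosDef := by
  refine Matrix.posDef_iff_dotProduct_mulVec.mpr ⟨hM, fun y hy => ?_⟩
  have h1 : 0 < y ⬝ᵥ y := by
    rcases lt_or_eq_of_le (dp_self_nonneg y) with h | h
    · exact h
    · exact absurd (dotProduct_self_eq_zero.mp h.symm) hy
  calc (0:ℝ) < ρ * (y ⬝ᵥ y) := mul_pos hρpos h1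
  _ ≤ y ⬝ᵥ M.mulVec y := quad_lower hM hρ y
  _ = (star y) ⬝ᵥ M.mulVec y := by simp

lemma inv_bound {K : ℕ} {M : Matrix (Fin K) (Fin K) ℝ} (hM : M.IsHermitian)
    {ρ : ℝ} (hρpos : 0 < ρ) (hρ : ∀ k, ρ ≤ hM.eigenvalues k) (x : Fin K → ℝ) :
    (M⁻¹.mulVec x) ⬝ᵥ (M⁻¹.mulVec x) ≤ (x ⬝ᵥ x) / ρ ^ 2 := by
  have hPD : M.PosDef := posdef_of_eigen hM hρpos hρ
  set v := M⁻¹.mulVec x with hv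
  have hMv : M.mulVec v = x := by
    rw [hv, Matrix.mulVec_mulVec,
      Matrix.mul_nonsing_inv _ (Matrix.isUnit_iff_isUnit_det _ |>.1 hPD.isUnit),
      Matrix.one_mulVec]
  have hcs : (v ⬝ᵥ M.mulVec v) ^ 2 ≤ (v ⬝ᵥ v) * (M.mulVec v ⬝ᵥ M.mulVec v) := by
    simpa [dotProduct, pow_two] using
      Finset.sum_mul_sq_le_sq_mul_sq Finset.univ v (M.mulVec v)
  have hlow : ρ * (v ⬝ᵥ v) ≤ v ⬝ᵥ M.mulVec v := quad_lower hM hρ v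
  have hvv : 0 ≤ v ⬝ᵥ v := dp_self_nonneg v
  have key : ρ ^ 2 * (v ⬝ᵥ v) ^ 2 ≤ (v ⬝ᵥ v) * (M.mulVec v ⬝ᵥ M.mulVec v) := by
    refine le_trans ?_ hcs
    have h2 := pow_le_pow_left₀ (mul_nonneg hρpos.le hvv) hlow 2
    calc ρ ^ 2 * (v ⬝ᵥ v) ^ 2 = (ρ * (v ⬝ᵥ v)) ^ 2 := by ring
    _ ≤ (v ⬝ᵥ M.mulVec v) ^ 2 := h2
  rw [← hMv, le_div_iff₀ (by positivity)]
  rcases eq_or_lt_of_le hvv with h | h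
  · rw [h.symm]
    simpa using dp_self_nonneg (M.mulVec v)
  · nlinarith [key]

lemma sub_dp_bound {n : Type*} [Fintype n] (a c : n → ℝ) :
    (a - c) ⬝ᵥ (a - c) ≤ 2 * (a ⬝ᵥ a) + 2 * (c ⬝ᵥ c) := by
  simp only [dotProduct, Pi.sub_apply, Finset.mul_sum, ← Finset.sum_add_distrib]
  exact Finset.sum_le_sum fun i _ => by nlinarith [sq_nonneg (a i + c i)]


/-- Mean-squared-error bound for the ridge part of the estimator (proof of Theorem 1):
with `M = ΨᵀΨ + λ₂R` symmetric with smallest eigenvalue `ρ_min > 0`, `R` positive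
semidefinite, and noise `ε` with independent square-integrable mean-zero coordinates of
variance `σ²`, the ridge estimator `b = M⁻¹Ψᵀ(Ψγ* + ε)` satisfies
`E‖b − γ*‖₂² ≤ 2 ρ_min⁻² (λ₂² ‖Rγ*‖₂² + σ² ‖Ψ‖_F²)`. -/
theorem ridge_mse_bound
    {Ω : Type*} [MeasurableSpace Ω] (P : Measure Ω) [IsProbabilityMeasure P]
    {N K : ℕ} (Ψ : Matrix (Fin N) (Fin K) ℝ) (R : Matrix (Fin K) (Fin K) ℝ)
    (hR : R.PosSemidef) (lam₂ : ℝ) (hlam₂ : 0 ≤ lam₂)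
    (hM : (Ψᵀ * Ψ + lam₂ • R).IsHermitian)
    (ρmin : ℝ) (hρ : IsLeast (Set.range hM.eigenvalues) ρmin) (hρpos : 0 < ρmin)
    (γstar : Fin K → ℝ) (σ : ℝ) (ε : Fin N → Ω → ℝ)
    (hmeas : ∀ i, Measurable (ε i))
    (hindep : iIndepFun ε P)
    (hL2 : ∀ i, MemLp (ε i) 2 P)
    (hmean : ∀ i, ∫ ω, ε i ω ∂P = 0)
    (hvar : ∀ i, ∫ ω, (ε i ω) ^ 2 ∂P = σ ^ 2)
    (b : Ω → Fin K → ℝ)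
    (hb : ∀ ω, b ω = ((Ψᵀ * Ψ + lam₂ • R)⁻¹).mulVec
      (Ψᵀ.mulVec (Ψ.mulVec γstar + fun i => ε i ω))) :
    ∫ ω, (b ω - γstar) ⬝ᵥ (b ω - γstar) ∂P ≤
      2 / ρmin ^ 2 *
        (lam₂ ^ 2 * (R.mulVec γstar ⬝ᵥ R.mulVec γstar) + σ ^ 2 * ∑ i, ∑ j, (Ψ i j) ^ 2) := by
  set M : Matrix (Fin K) (Fin K) ℝ := Ψᵀ * Ψ + lam₂ • R with hMdef
  have hρ' : ∀ k, ρmin ≤ hM.eigenvalues k := fun k => hρ.2 ⟨k, rfl⟩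
  have hPD : M.PosDef := posdef_of_eigen hM hρpos hρ'
  have hinv : M⁻¹ * M = 1 :=
    Matrix.nonsing_inv_mul _ (Matrix.isUnit_iff_isUnit_det _ |>.1 hPD.isUnit)
  -- decomposition
  set c : Fin K → ℝ := lam₂ • R.mulVec γstar with hc
  set a : Ω → Fin K → ℝ := fun ω => Ψᵀ.mulVec (fun i => ε i ω) with ha
  have hdec : ∀ ω, b ω - γstar = M⁻¹.mulVec (a ω - c) := by
    intro ω
    rw [hb ω]
    have h1 : Ψᵀ.mulVec (Ψ.mulVec γstar + fun i => ε i ω)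
        = M.mulVec γstar + (a ω - c) := by
      rw [Matrix.mulVec_add, Matrix.mulVec_mulVec, hMdef, Matrix.add_mulVec,
        Matrix.smul_mulVec]
      simp only [ha, hc]
      abel
    rw [h1, Matrix.mulVec_add, Matrix.mulVec_mulVec, hinv, Matrix.one_mulVec]
    abel
  -- pointwise bound
  set S : Ω → ℝ := fun ω => a ω ⬝ᵥ a ω with hS
  have hpt : ∀ ω, (b ω - γstar) ⬝ᵥ (b ω - γstar)
      ≤ 2 / ρmin ^ 2 * (lam₂ ^ 2 * (R.mulVec γstar ⬝ᵥ R.mulVec γstar)) + 2 / ρmin ^ 2 * S ω := by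
    intro ω
    rw [hdec ω]
    refine le_trans (inv_bound hM hρpos hρ' _) ?_
    have h2 : (a ω - c) ⬝ᵥ (a ω - c) ≤ 2 * S ω + 2 * (lam₂ ^ 2 * (R.mulVec γstar ⬝ᵥ R.mulVec γstar)) := by
      refine le_trans (sub_dp_bound _ _) ?_
      have : c ⬝ᵥ c = lam₂ ^ 2 * (R.mulVec γstar ⬝ᵥ R.mulVec γstar) := by
        simp [hc, smul_dotProduct, dotProduct_smul, smul_eq_mul, pow_two]; ring
      rw [this]
    have hρ2 : (0:ℝ) < ρmin ^ 2 := by positivity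
    calc (a ω - c) ⬝ᵥ (a ω - c) / ρmin ^ 2
        ≤ (2 * S ω + 2 * (lam₂ ^ 2 * (R.mulVec γstar ⬝ᵥ R.mulVec γstar))) / ρmin ^ 2 := by
          gcongr
    _ = 2 / ρmin ^ 2 * (lam₂ ^ 2 * (R.mulVec γstar ⬝ᵥ R.mulVec γstar)) + 2 / ρmin ^ 2 * S ω := by
          ring
  -- integrability of products
  have hint : ∀ i j, Integrable (fun ω => ε i ω * ε j ω) P := by
    intro i j
    rcases eq_or_ne i j with rfl | hij
    · simpa [pow_two] using (hL2 i).integrable_sq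
    · exact (hindep.indepFun hij).integrable_mul ((hL2 i).integrable one_le_two)
        ((hL2 j).integrable one_le_two)
  have hintval : ∀ i j, (∫ ω, ε i ω * ε j ω ∂P) = if i = j then σ ^ 2 else 0 := by
    intro i j
    rcases eq_or_ne i j with rfl | hij
    · simp only [if_pos rfl]
      rw [← hvar i]; congr 1; ext ω; ring
    · rw [if_neg hij]
      have h := (hindep.indepFun hij).integral_mul_eq_mul_integral (hL2 i).aestronglyMeasurable
        (hL2 j).aestronglyMeasurable
      have h2 : (fun ω => ε i ω * ε j ω) = ε i * ε j := rfl
      rw [h2, h, hmean i, zero_mul]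
  -- expand S
  have hSexp : ∀ ω, S ω = ∑ k, ∑ i, ∑ j, (Ψ i k * Ψ j k) * (ε i ω * ε j ω) := by
    intro ω
    simp only [hS, dotProduct, ha, Matrix.mulVec, Matrix.transpose_apply]
    refine Finset.sum_congr rfl fun k _ => ?_
    rw [Finset.sum_mul_sum]
    exact Finset.sum_congr rfl fun i _ => Finset.sum_congr rfl fun j _ => by ring
  have hSint : Integrable S P := by
    have : S = fun ω => ∑ k, ∑ i, ∑ j, (Ψ i k * Ψ j k) * (ε i ω * ε j ω) := funext hSexp
    rw [this]
    refine integrable_finset_sum _ fun k _ => integrable_finset_sum _ fun i _ =>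
      integrable_finset_sum _ fun j _ => (hint i j).const_mul _
  have hSval : ∫ ω, S ω ∂P = σ ^ 2 * ∑ i, ∑ j, (Ψ i j) ^ 2 := by
    have : ∫ ω, S ω ∂P = ∑ k, ∑ i, ∑ j, (Ψ i k * Ψ j k) * (if i = j then σ ^ 2 else 0) := by
      simp only [hSexp]
      rw [integral_finset_sum _ fun k _ => integrable_finset_sum _ fun i _ =>
        integrable_finset_sum _ fun j _ => (hint i j).const_mul _]
      refine Finset.sum_congr rfl fun k _ => ?_
      rw [integral_finset_sum _ fun i _ => integrable_finset_sum _ fun j _ =>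
        (hint i j).const_mul _]
      refine Finset.sum_congr rfl fun i _ => ?_
      rw [integral_finset_sum _ fun j _ => (hint i j).const_mul _]
      refine Finset.sum_congr rfl fun j _ => ?_
      rw [integral_const_mul, hintval i j]
    rw [this]
    have h4 : ∀ (k : Fin K) (i : Fin N),
        (∑ j, (Ψ i k * Ψ j k) * (if i = j then σ ^ 2 else 0)) = σ ^ 2 * Ψ i k ^ 2 := by
      intro k i
      rw [Finset.sum_eq_single i (fun j _ hj => by simp [Ne.symm hj])
        (fun h => absurd (Finset.mem_univ i) h)]
      simp [pow_two]; ring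
    simp only [h4]
    rw [Finset.sum_comm, Finset.mul_sum]
    exact Finset.sum_congr rfl fun i _ => (Finset.mul_sum _ _ _).symm
  -- put together
  have hg : Integrable (fun ω => 2 / ρmin ^ 2 * (lam₂ ^ 2 * (R.mulVec γstar ⬝ᵥ R.mulVec γstar))
      + 2 / ρmin ^ 2 * S ω) P := by
    exact (integrable_const _).add (hSint.const_mul _)
  have hmono := integral_mono_of_nonneg (Filter.Eventually.of_forall fun ω => dp_self_nonneg _)
    hg (Filter.Eventually.of_forall hpt)
  refine hmono.trans ?_
  rw [integral_add (integrable_const _) (hSint.const_mul _), integral_const,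
    integral_const_mul, hSval]
  simp [measure_univ]
  ring_nf
  exact le_refl _
end

section
/- Fix a design matrix Ψ ∈ ℝ^{N×K}, a partition of the K coordinates into S groups with blocks γ_g of sizes d_g, weights c_g > 0, ν ∈ (0,1), λ₁ ≥ 0, λ₂ ≥ 0, and a symmetric positive semidefinite R ∈ ℝ^{K×K}; for y ∈ ℝ^N define L_y(γ) = ‖y − Ψγ‖₂² + λ₁ Σ_{g=1}^S c_g ‖γ_g‖₁^ν + λ₂ γᵀRγ. Assume the smallest eigenvalue ρ_min of M = ΨᵀΨ + λ₂R is strictly positive and let b = M⁻¹Ψᵀy be the ridge estimator. If γ̂ minimizes L_y over ℝ^K and every block b_g of b is nonzero, then ‖γ̂ − b‖₂ ≤ (2λ₁/ρ_min) · ( Σ_{g=1}^S d_g c_g² ‖b_g‖₁^{2(ν−1)} )^{1/2}. -/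
open Matrix

private lemma rayleigh_aux {n : ℕ} {A : Matrix (Fin n) (Fin n) ℝ} (hA : A.IsHermitian)
    {ρ : ℝ} (hρ : ∀ i, ρ ≤ hA.eigenvalues i) (x : Fin n → ℝ) :
    ρ * (x ⬝ᵥ x) ≤ x ⬝ᵥ A.mulVec x := by
  classical
  set U : Matrix (Fin n) (Fin n) ℝ := (hA.eigenvectorUnitary : Matrix (Fin n) (Fin n) ℝ) with hUdef
  have hstar : star U = Uᵀ := by
    rw [Matrix.star_eq_conjTranspose, Matrix.conjTranspose_eq_transpose_of_trivial]
  have hUU : U * Uᵀ = 1 := by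
    have h := Matrix.mem_unitaryGroup_iff.mp hA.eigenvectorUnitary.2
    rw [← hUdef] at h
    rwa [hstar] at h
  set v : Fin n → ℝ := x ᵥ* U with hv
  have hxx : x ⬝ᵥ x = v ⬝ᵥ v := by
    rw [hv]
    nth_rewrite 2 [← Matrix.mulVec_transpose]
    rw [Matrix.dotProduct_mulVec, Matrix.vecMul_vecMul, hUU, Matrix.vecMul_one]
  have hAx : x ⬝ᵥ A.mulVec x = ∑ i, hA.eigenvalues i * (v i) ^ 2 := by
    conv_lhs => rw [hA.spectral_theorem, Unitary.conjStarAlgAut_apply]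
    rw [← hUdef, hstar, ← Matrix.mulVec_mulVec, ← Matrix.mulVec_mulVec,
      Matrix.dotProduct_mulVec, ← hv, Matrix.mulVec_transpose, ← hv]
    simp only [Matrix.mulVec_diagonal, dotProduct, Function.comp_apply,
      RCLike.ofReal_real_eq_id, id_eq]
    exact Finset.sum_congr rfl fun i _ => by ring
  rw [hxx, hAx, dotProduct, Finset.mul_sum]
  refine Finset.sum_le_sum fun i _ => ?_
  nlinarith [hρ i, sq_nonneg (v i)]

private lemma rpow_diff_le_aux {ν t s d : ℝ} (hν0 : 0 < ν) (hν1 : ν < 1)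
    (ht : 0 < t) (hs : 0 ≤ s) (hd : |t - s| ≤ d) :
    t ^ ν - s ^ ν ≤ t ^ (ν - 1) * d := by
  have htν1 : 0 < t ^ (ν - 1) := Real.rpow_pos_of_pos ht _
  rcases le_or_gt s t with h | h
  · have h2 : t ^ (ν - 1) * t = t ^ ν := by
      rw [← Real.rpow_add_one ht.ne' (ν - 1)]
      norm_num
    have h3 : t ^ (ν - 1) * s ≤ s ^ ν := by
      rcases eq_or_lt_of_le hs with h0 | h0
      · simp [← h0, Real.zero_rpow hν0.ne']
      · have hts : t ^ (ν - 1) ≤ s ^ (ν - 1) :=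
          Real.rpow_le_rpow_of_nonpos h0 h (by linarith)
        have h4 : s ^ (ν - 1) * s = s ^ ν := by
          rw [← Real.rpow_add_one h0.ne' (ν - 1)]
          norm_num
        nlinarith
    have htd : t - s ≤ d := (le_abs_self _).trans hd
    nlinarith
  · have h1 : t ^ ν ≤ s ^ ν := Real.rpow_le_rpow ht.le h.le hν0.le
    have hd0 : 0 ≤ d := (abs_nonneg _).trans hd
    nlinarith

/-- Deterministic proximity bound between the group-bridge-penalized minimizer and the
ridge estimator (first step of the proof of Theorem 1): if `γ̂` minimizes
`L(γ) = ‖y − Ψγ‖₂² + λ₁ ∑ g c_g ‖γ_g‖₁^ν + λ₂ γᵀRγ` and every block of the ridge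
estimator `b = (ΨᵀΨ + λ₂R)⁻¹Ψᵀy` is nonzero, then
`‖γ̂ − b‖₂ ≤ (2λ₁/ρ_min) (∑ g d_g c_g² ‖b_g‖₁^{2(ν−1)})^{1/2}`,
where `ρ_min > 0` is the smallest eigenvalue of `M = ΨᵀΨ + λ₂R` and `d_g` is the size of
group `g`. -/
theorem group_bridge_proximity_to_ridge
    {N K S : ℕ} (Ψ : Matrix (Fin N) (Fin K) ℝ) (y : Fin N → ℝ)
    (gr : Fin K → Fin S) (c : Fin S → ℝ) (hc : ∀ g, 0 < c g)
    (ν : ℝ) (hν : ν ∈ Set.Ioo (0 : ℝ) 1)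
    (lam₁ : ℝ) (hlam₁ : 0 ≤ lam₁) (lam₂ : ℝ) (hlam₂ : 0 ≤ lam₂)
    (R : Matrix (Fin K) (Fin K) ℝ) (hR : R.PosSemidef)
    (hM : (Ψᵀ * Ψ + lam₂ • R).IsHermitian)
    (ρmin : ℝ) (hρ : IsLeast (Set.range hM.eigenvalues) ρmin) (hρpos : 0 < ρmin)
    (b : Fin K → ℝ)
    (hb : b = ((Ψᵀ * Ψ + lam₂ • R)⁻¹).mulVec (Ψᵀ.mulVec y))
    (L : (Fin K → ℝ) → ℝ)
    (hL : ∀ γ, L γ = (y - Ψ.mulVec γ) ⬝ᵥ (y - Ψ.mulVec γ) +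
      lam₁ * ∑ g, c g * (∑ i ∈ Finset.univ.filter (fun i => gr i = g), |γ i|) ^ ν +
      lam₂ * (γ ⬝ᵥ R.mulVec γ))
    (γhat : Fin K → ℝ) (hmin : ∀ γ, L γhat ≤ L γ)
    (hbnz : ∀ g, 0 < ∑ i ∈ Finset.univ.filter (fun i => gr i = g), |b i|) :
    Real.sqrt ((γhat - b) ⬝ᵥ (γhat - b)) ≤
      2 * lam₁ / ρmin *
        Real.sqrt (∑ g, ((Finset.univ.filter (fun i => gr i = g)).card : ℝ) * (c g) ^ 2 *
          (∑ i ∈ Finset.univ.filter (fun i => gr i = g), |b i|) ^ (2 * (ν - 1))) := by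
  classical
  obtain ⟨hν0, hν1⟩ := hν
  set M : Matrix (Fin K) (Fin K) ℝ := Ψᵀ * Ψ + lam₂ • R with hMdef
  set u : Fin K → ℝ := γhat - b with hu
  have hray : ∀ x : Fin K → ℝ, ρmin * (x ⬝ᵥ x) ≤ x ⬝ᵥ M.mulVec x := fun x =>
    rayleigh_aux hM (fun i => hρ.2 (Set.mem_range_self i)) x
  -- positive definiteness and the normal equations
  have hPD : M.PosDef := by
    refine Matrix.posDef_iff_dotProduct_mulVec.mpr ⟨hM, fun x hx => ?_⟩
    have h1 : 0 < x ⬝ᵥ x := by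
      obtain ⟨i, hi⟩ := Function.ne_iff.mp hx
      exact Finset.sum_pos' (fun j _ => mul_self_nonneg (x j))
        ⟨i, Finset.mem_univ i, mul_self_pos.mpr hi⟩
    have h2 := hray x
    simpa using lt_of_lt_of_le (by nlinarith) h2
  have hMb : M *ᵥ b = Ψᵀ *ᵥ y := by
    rw [hb, Matrix.mulVec_mulVec, Matrix.mul_nonsing_inv _
      ((Matrix.isUnit_iff_isUnit_det _).mp hPD.isUnit), Matrix.one_mulVec]
  have hγ : γhat = b + u := by rw [hu]; abel
  -- symmetry of R
  have hRT : Rᵀ = R := by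
    have h := hR.1
    rwa [Matrix.IsHermitian, Matrix.conjTranspose_eq_transpose_of_trivial] at h
  have hRsymm : ∀ a w : Fin K → ℝ, a ⬝ᵥ R *ᵥ w = w ⬝ᵥ R *ᵥ a := by
    intro a w
    rw [Matrix.dotProduct_mulVec, ← Matrix.mulVec_transpose, hRT, dotProduct_comm]
  -- cross-term identity
  have e3 : (y - Ψ *ᵥ b) ⬝ᵥ (Ψ *ᵥ u) = lam₂ * (u ⬝ᵥ R *ᵥ b) := by
    rw [Matrix.dotProduct_mulVec, ← Matrix.mulVec_transpose]
    have h5 : Ψᵀ *ᵥ (y - Ψ *ᵥ b) = lam₂ • (R *ᵥ b) := by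
      rw [Matrix.mulVec_sub, ← hMb, Matrix.mulVec_mulVec, hMdef, Matrix.add_mulVec,
        Matrix.smul_mulVec]
      abel
    rw [h5, smul_dotProduct, smul_eq_mul, dotProduct_comm]
  have e4 : u ⬝ᵥ M *ᵥ u = (Ψ *ᵥ u) ⬝ᵥ (Ψ *ᵥ u) + lam₂ * (u ⬝ᵥ R *ᵥ u) := by
    rw [hMdef, Matrix.add_mulVec, dotProduct_add, Matrix.smul_mulVec,
      dotProduct_smul, smul_eq_mul, ← Matrix.mulVec_mulVec,
      Matrix.dotProduct_mulVec, Matrix.vecMul_transpose]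
  -- the quadratic expansion
  have hquad : (y - Ψ *ᵥ γhat) ⬝ᵥ (y - Ψ *ᵥ γhat) + lam₂ * (γhat ⬝ᵥ R *ᵥ γhat)
      = (y - Ψ *ᵥ b) ⬝ᵥ (y - Ψ *ᵥ b) + lam₂ * (b ⬝ᵥ R *ᵥ b) + u ⬝ᵥ M *ᵥ u := by
    have hyy : y - Ψ *ᵥ (b + u) = (y - Ψ *ᵥ b) - Ψ *ᵥ u := by
      rw [Matrix.mulVec_add]; abel
    have hsplit : ∀ r : Fin N → ℝ, (r - Ψ *ᵥ u) ⬝ᵥ (r - Ψ *ᵥ u)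
        = r ⬝ᵥ r - 2 * (r ⬝ᵥ Ψ *ᵥ u) + (Ψ *ᵥ u) ⬝ᵥ (Ψ *ᵥ u) := by
      intro r
      rw [sub_dotProduct, dotProduct_sub, dotProduct_sub,
        dotProduct_comm (Ψ *ᵥ u) r]
      ring
    have ha : ((y - Ψ *ᵥ b) - Ψ *ᵥ u) ⬝ᵥ ((y - Ψ *ᵥ b) - Ψ *ᵥ u)
        = (y - Ψ *ᵥ b) ⬝ᵥ (y - Ψ *ᵥ b) - 2 * (lam₂ * (u ⬝ᵥ R *ᵥ b))
          + (Ψ *ᵥ u) ⬝ᵥ (Ψ *ᵥ u) := by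
      rw [hsplit, e3]
    have hb2 : (b + u) ⬝ᵥ R *ᵥ (b + u)
        = b ⬝ᵥ R *ᵥ b + 2 * (u ⬝ᵥ R *ᵥ b) + u ⬝ᵥ R *ᵥ u := by
      rw [Matrix.mulVec_add, add_dotProduct, dotProduct_add,
        dotProduct_add, hRsymm b u]
      ring
    rw [hγ, hyy, ha, hb2, e4]
    ring
  -- basic inequality
  have h1 := hmin b
  rw [hL γhat, hL b] at h1
  have hkey : u ⬝ᵥ M *ᵥ u ≤
      lam₁ * ((∑ g, c g * (∑ i ∈ Finset.univ.filter (fun i => gr i = g), |b i|) ^ ν) -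
        (∑ g, c g * (∑ i ∈ Finset.univ.filter (fun i => gr i = g), |γhat i|) ^ ν)) := by
    rw [mul_sub]; linarith
  -- notation for the group quantities
  set tb : Fin S → ℝ := fun g => ∑ i ∈ Finset.univ.filter (fun i => gr i = g), |b i| with htb
  set tγ : Fin S → ℝ := fun g => ∑ i ∈ Finset.univ.filter (fun i => gr i = g), |γhat i| with htγ
  set n1 : Fin S → ℝ := fun g => ∑ i ∈ Finset.univ.filter (fun i => gr i = g), |u i| with hn1
  set q : Fin S → ℝ := fun g => ∑ i ∈ Finset.univ.filter (fun i => gr i = g), (u i) ^ 2 with hq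
  have hq0 : ∀ g, 0 ≤ q g := fun g => Finset.sum_nonneg fun i _ => sq_nonneg _
  -- per-group penalty bound
  have hub : ∀ g, c g * tb g ^ ν - c g * tγ g ^ ν ≤ c g * (tb g ^ (ν - 1) * n1 g) := by
    intro g
    have habs : |tb g - tγ g| ≤ n1 g := by
      rw [htb, htγ, hn1, ← Finset.sum_sub_distrib]
      refine (Finset.abs_sum_le_sum_abs _ _).trans (Finset.sum_le_sum fun i _ => ?_)
      calc |(|b i| - |γhat i|)| ≤ |b i - γhat i| := abs_abs_sub_abs_le_abs_sub _ _
        _ = |u i| := by rw [hu]; simp [abs_sub_comm]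
    have := rpow_diff_le_aux hν0 hν1 (hbnz g) (Finset.sum_nonneg fun i _ => abs_nonneg _) habs
    have hcg := (hc g).le
    calc c g * tb g ^ ν - c g * tγ g ^ ν = c g * (tb g ^ ν - tγ g ^ ν) := by ring
      _ ≤ c g * (tb g ^ (ν - 1) * n1 g) := by
          exact mul_le_mul_of_nonneg_left this hcg
  -- ℓ¹–ℓ² per group
  have hl12 : ∀ g, n1 g ≤ Real.sqrt (Finset.univ.filter (fun i => gr i = g)).card * Real.sqrt (q g) := by
    intro g
    have hsq : n1 g ^ 2 ≤ ((Finset.univ.filter (fun i => gr i = g)).card : ℝ) * q g := by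
      have h := sq_sum_le_card_mul_sum_sq
        (s := Finset.univ.filter (fun i => gr i = g)) (f := fun i => |u i|)
      simpa [hn1, hq, sq_abs] using h
    have hn1nn : 0 ≤ n1 g := Finset.sum_nonneg fun i _ => abs_nonneg _
    have := (Real.le_sqrt hn1nn (mul_nonneg (Nat.cast_nonneg _) (hq0 g))).mpr hsq
    rwa [Real.sqrt_mul (Nat.cast_nonneg _)] at this
  -- Cauchy–Schwarz across groups
  set T : ℝ := Real.sqrt (∑ g, ((Finset.univ.filter (fun i => gr i = g)).card : ℝ) * (c g) ^ 2 *
      (tb g) ^ (2 * (ν - 1))) with hT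
  set s0 : ℝ := Real.sqrt (u ⬝ᵥ u) with hs0
  have huu0 : 0 ≤ u ⬝ᵥ u := Finset.sum_nonneg fun i _ => mul_self_nonneg _
  have hsumq : ∑ g, q g = u ⬝ᵥ u := by
    rw [hq, dotProduct]
    rw [Finset.sum_fiberwise Finset.univ gr (fun i => u i ^ 2)]
    exact Finset.sum_congr rfl fun i _ => sq (u i)
  have hCS : ∑ g, c g * tb g ^ (ν - 1) * n1 g ≤ T * s0 := by
    have step1 : ∑ g, c g * tb g ^ (ν - 1) * n1 g ≤
        ∑ g, (c g * tb g ^ (ν - 1) * Real.sqrt (Finset.univ.filter (fun i => gr i = g)).card) *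
          Real.sqrt (q g) := by
      refine Finset.sum_le_sum fun g _ => ?_
      have hpos : 0 ≤ c g * tb g ^ (ν - 1) :=
        mul_nonneg (hc g).le (Real.rpow_pos_of_pos (hbnz g) _).le
      calc c g * tb g ^ (ν - 1) * n1 g
          ≤ c g * tb g ^ (ν - 1) * (Real.sqrt (Finset.univ.filter (fun i => gr i = g)).card *
            Real.sqrt (q g)) := mul_le_mul_of_nonneg_left (hl12 g) hpos
        _ = (c g * tb g ^ (ν - 1) * Real.sqrt (Finset.univ.filter (fun i => gr i = g)).card) *
            Real.sqrt (q g) := by ring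
    have step2 := Real.sum_mul_le_sqrt_mul_sqrt Finset.univ
      (fun g => c g * tb g ^ (ν - 1) * Real.sqrt (Finset.univ.filter (fun i => gr i = g)).card)
      (fun g => Real.sqrt (q g))
    have heq1 : ∑ g, (c g * tb g ^ (ν - 1) *
        Real.sqrt (Finset.univ.filter (fun i => gr i = g)).card) ^ 2
        = ∑ g, ((Finset.univ.filter (fun i => gr i = g)).card : ℝ) * (c g) ^ 2 *
          (tb g) ^ (2 * (ν - 1)) := by
      refine Finset.sum_congr rfl fun g _ => ?_
      have h2 : (tb g ^ (ν - 1)) ^ 2 = tb g ^ (2 * (ν - 1)) := by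
        rw [← Real.rpow_natCast (tb g ^ (ν - 1)) 2, ← Real.rpow_mul (hbnz g).le]
        norm_num [mul_comm]
        rfl
      rw [mul_pow, mul_pow, Real.sq_sqrt (Nat.cast_nonneg _), h2]
      ring
    have heq2 : ∑ g, (Real.sqrt (q g)) ^ 2 = u ⬝ᵥ u := by
      rw [← hsumq]
      exact Finset.sum_congr rfl fun g _ => Real.sq_sqrt (hq0 g)
    rw [heq1, heq2, ← hT, ← hs0] at step2
    exact step1.trans step2
  -- combine everything
  have hfinal : ρmin * (u ⬝ᵥ u) ≤ lam₁ * (T * s0) := by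
    refine (hray u).trans (hkey.trans (mul_le_mul_of_nonneg_left ?_ hlam₁))
    calc (∑ g, c g * tb g ^ ν) - (∑ g, c g * tγ g ^ ν)
        = ∑ g, (c g * tb g ^ ν - c g * tγ g ^ ν) := by rw [Finset.sum_sub_distrib]
      _ ≤ ∑ g, c g * (tb g ^ (ν - 1) * n1 g) := Finset.sum_le_sum fun g _ => hub g
      _ = ∑ g, c g * tb g ^ (ν - 1) * n1 g := by
          exact Finset.sum_congr rfl fun g _ => by ring
      _ ≤ T * s0 := hCS
  have hTnn : 0 ≤ T := Real.sqrt_nonneg _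
  have hs0sq : u ⬝ᵥ u = s0 ^ 2 := (Real.sq_sqrt huu0).symm
  show s0 ≤ 2 * lam₁ / ρmin * T
  rcases eq_or_lt_of_le (Real.sqrt_nonneg (u ⬝ᵥ u) : (0:ℝ) ≤ s0) with h0 | h0
  · have hz : s0 = 0 := by rw [hs0, ← h0]
    rw [hz]
    exact mul_nonneg (div_nonneg (by linarith) hρpos.le) hTnn
  · have h7 : ρmin * s0 ≤ lam₁ * T := by
      rw [hs0sq] at hfinal
      have : ρmin * s0 * s0 ≤ lam₁ * T * s0 := by nlinarith
      exact le_of_mul_le_mul_right this h0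
    rw [div_mul_eq_mul_div, le_div_iff₀ hρpos]
    nlinarith [mul_nonneg hlam₁ hTnn]
end
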